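/- Let s : P/G → P/H be any section of the canonical projection π : P/H → P/G (i.e. π ∘ s = id). Then the set Q_s = { p ∈ P : the H-orbit of p equals s(the G-orbit of p) } is a reduced H-subset of P, i.e. Q_s is H-invariant and, for every p ∈ P, the intersection of Q_s with the G-orbit of p is nonempty and equals a single H-orbit. (Set-theoretic core of Theorem 1 on reduction of structure groups.) -/
import Mathlib


/-- `Q` is a *reduced H-subset* of `P`: it is `H`-invariant and, for every `p : P`,
its intersection with the `G`-orbit of `p` is nonempty and equals a single `H`-orbit. -/
def IsReducedHSubset {G : Type*} [Group G] (H : Subgroup G) {P : Type*} [MulAction G P]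
    (Q : Set P) : Prop :=
  (∀ (ρ : H) (p : P), p ∈ Q → ρ • p ∈ Q) ∧
    ∀ p : P, ∃ q : P, q ∈ Q ∩ MulAction.orbit G p ∧
      Q ∩ MulAction.orbit G p = MulAction.orbit H q

/-- The canonical projection `P/H → P/G` sending an `H`-orbit to the `G`-orbit containing it. -/
def canonicalProj {G : Type*} [Group G] (H : Subgroup G) (P : Type*) [MulAction G P] :
    Quotient (MulAction.orbitRel H P) → Quotient (MulAction.orbitRel G P) :=
  Quotient.map' id fun _ _ h => by
    obtain ⟨ρ, hρ⟩ := h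
    exact ⟨(ρ : G), hρ⟩

theorem reduced_subset_of_section {G : Type*} [Group G] (H : Subgroup G)
    {P : Type*} [MulAction G P]
    (hfree : ∀ (g : G) (p : P), g • p = p → g = 1)
    (s : Quotient (MulAction.orbitRel G P) → Quotient (MulAction.orbitRel H P))
    (hs : canonicalProj H P ∘ s = id) :
    IsReducedHSubset H
      {p : P | (Quotient.mk'' p : Quotient (MulAction.orbitRel H P)) =
        s (Quotient.mk'' p : Quotient (MulAction.orbitRel G P))} := by
  have mkH : ∀ x y : P, (Quotient.mk'' x : Quotient (MulAction.orbitRel H P)) =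
      Quotient.mk'' y ↔ x ∈ MulAction.orbit H y := by
    intro x y; rw [Quotient.eq'']; rfl
  have mkG : ∀ x y : P, (Quotient.mk'' x : Quotient (MulAction.orbitRel G P)) =
      Quotient.mk'' y ↔ x ∈ MulAction.orbit G y := by
    intro x y; rw [Quotient.eq'']; rfl
  constructor
  · intro ρ p hp
    have h1 : (Quotient.mk'' (ρ • p) : Quotient (MulAction.orbitRel H P)) = Quotient.mk'' p :=
      (mkH _ _).2 ⟨ρ, rfl⟩
    have h2 : (Quotient.mk'' (ρ • p) : Quotient (MulAction.orbitRel G P)) = Quotient.mk'' p :=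
      (mkG _ _).2 ⟨(ρ : G), rfl⟩
    simp only [Set.mem_setOf_eq] at hp ⊢
    rw [h1, h2, hp]
  · intro p
    obtain ⟨q, hq⟩ := Quotient.exists_rep (s (Quotient.mk'' p))
    -- q's G-class equals p's G-class
    have hproj : canonicalProj H P (s (Quotient.mk'' p)) = Quotient.mk'' p :=
      congrFun hs _
    have hqG : (Quotient.mk'' q : Quotient (MulAction.orbitRel G P)) = Quotient.mk'' p := by
      rw [← hproj, ← hq]; rfl
    have hqQ : (Quotient.mk'' q : Quotient (MulAction.orbitRel H P)) =
        s (Quotient.mk'' q) := by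
      rw [hqG, ← hq]
    refine ⟨q, ⟨hqQ, (mkG q p).1 hqG⟩, ?_⟩
    ext x
    simp only [Set.mem_inter_iff, Set.mem_setOf_eq]
    constructor
    · rintro ⟨hxQ, hxG⟩
      have : (Quotient.mk'' x : Quotient (MulAction.orbitRel G P)) = Quotient.mk'' p :=
        (mkG x p).2 hxG
      have hxq : (Quotient.mk'' x : Quotient (MulAction.orbitRel H P)) = Quotient.mk'' q := by
        rw [hxQ, this, ← hq]
      exact (mkH x q).1 hxq
    · intro hx
      have hxH : (Quotient.mk'' x : Quotient (MulAction.orbitRel H P)) = Quotient.mk'' q :=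
        (mkH x q).2 hx
      obtain ⟨ρ, hρ⟩ := hx
      have hxGq : (Quotient.mk'' x : Quotient (MulAction.orbitRel G P)) = Quotient.mk'' q :=
        (mkG x q).2 ⟨(ρ : G), hρ⟩
      have hxGp : (Quotient.mk'' x : Quotient (MulAction.orbitRel G P)) = Quotient.mk'' p := by
        rw [hxGq, hqG]
      exact ⟨by rw [hxH, hqQ, hxGq], (mkG x p).1 hxGp⟩
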